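/- An element r of the field ℂ of complex numbers is arithmetically fixed if and only if r is rational; that is, ℂ̃ equals the image of ℚ in ℂ. -/

import Mathlib

/-- A map `f` is *arithmetic* on a subset `A` of a field `K`. -/
def ArithmeticMap {K : Type*} [Field K] (A : Set K) (f : K → K) : Prop :=
  ((1 : K) ∈ A → f 1 = 1) ∧
  (∀ a b : K, a ∈ A → b ∈ A → a + b ∈ A → f (a + b) = f a + f b) ∧
  (∀ a b : K, a ∈ A → b ∈ A → a * b ∈ A → f (a * b) = f a * f b)

/-- An element `r` of a field `K` is *arithmetically fixed* if there is a finite set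
`A ⊆ K` with `r ∈ A` such that every arithmetic map `f : A → K` fixes `r`. -/
def ArithFixed {K : Type*} [Field K] (r : K) : Prop :=
  ∃ A : Finset K, r ∈ A ∧ ∀ f : K → K, ArithmeticMap (↑A : Set K) f → f r = r

open scoped IntermediateField

open Cardinal in
lemma key_equiv {E K L : Type} [Field E] [Field K] [Field L] [Algebra E K] [Algebra E L]
    [IsAlgClosed K] [IsAlgClosed L] [Countable E]
    (hcard : #K = #L) (hbig : ℵ₀ < #K) :
    ∃ σ : K ≃+* L, ∀ x : E, σ (algebraMap E K x) = algebraMap E L x := by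
  obtain ⟨ι, v, hv⟩ := exists_isTranscendenceBasis' E K
  obtain ⟨κ, w, hw⟩ := exists_isTranscendenceBasis' E L
  have hE : #E ≤ ℵ₀ := Cardinal.mk_le_aleph0
  have hι : #ι = #K := by
    apply le_antisymm
    · exact Cardinal.mk_le_of_injective hv.1.injective
    · have h1 := IsAlgClosed.cardinal_le_max_transcendence_basis v hv
      simp only [Cardinal.lift_id] at h1
      have h2 : #K ≤ max #ι ℵ₀ := by
        exact h1.trans (max_le (max_le (hE.trans (le_max_right _ _)) (le_max_left _ _))
          (le_max_right _ _))
      rcases le_max_iff.mp h2 with h | h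
      · exact h
      · exact absurd h (not_le.mpr hbig)
  have hκ : #κ = #L := by
    apply le_antisymm
    · exact Cardinal.mk_le_of_injective hw.1.injective
    · have h1 := IsAlgClosed.cardinal_le_max_transcendence_basis w hw
      simp only [Cardinal.lift_id] at h1
      have h2 : #L ≤ max #κ ℵ₀ := by
        exact h1.trans (max_le (max_le (hE.trans (le_max_right _ _)) (le_max_left _ _))
          (le_max_right _ _))
      rcases le_max_iff.mp h2 with h | h
      · exact h
      · exact absurd h (not_le.mpr (hcard ▸ hbig))
  obtain ⟨e⟩ : Nonempty (ι ≃ κ) := Cardinal.eq.1 (by rw [hι, hκ, hcard])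
  letI := IsAlgClosed.isAlgClosure_of_transcendence_basis v hv
  letI := IsAlgClosed.isAlgClosure_of_transcendence_basis w hw
  let eA : Algebra.adjoin E (Set.range v) ≃+* Algebra.adjoin E (Set.range w) :=
    (hv.1.aevalEquiv.symm.trans ((MvPolynomial.renameEquiv E e).trans hw.1.aevalEquiv)).toRingEquiv
  refine ⟨IsAlgClosure.equivOfEquiv K L eA, fun x => ?_⟩
  rw [IsScalarTower.algebraMap_apply E (Algebra.adjoin E (Set.range v)) K x,
    IsAlgClosure.equivOfEquiv_algebraMap]
  have h3 : eA (algebraMap E (Algebra.adjoin E (Set.range v)) x)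
      = algebraMap E (Algebra.adjoin E (Set.range w)) x :=
    AlgEquiv.commutes (hv.1.aevalEquiv.symm.trans
      ((MvPolynomial.renameEquiv E e).trans hw.1.aevalEquiv)) x
  rw [h3, ← IsScalarTower.algebraMap_apply]

/-- Any embedding of a countable subfield of `ℂ` extends to a ring endomorphism of `ℂ`. -/
lemma exists_ringHom_ext (E : IntermediateField ℚ ℂ) (hc : Countable E) (τ : E →ₐ[ℚ] ℂ) :
    ∃ σ : ℂ →+* ℂ, ∀ x : E, σ x = τ x := by
  haveI := hc
  obtain ⟨σ, hσ⟩ := @key_equiv E ℂ ℂ _ _ _ _ (RingHom.toAlgebra τ.toRingHom) _ _ _ rfl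
    (by rw [Cardinal.mk_complex]; exact Cardinal.aleph0_lt_continuum)
  refine ⟨σ.toRingHom, fun x => ?_⟩
  have := hσ x
  rwa [show algebraMap E ℂ x = (x : ℂ) from rfl] at this

/-- Every non-rational complex number is moved by some ring endomorphism of `ℂ`. -/
lemma exists_ringHom_ne (r : ℂ) (hr : r ∉ Set.range ((↑) : ℚ → ℂ)) :
    ∃ σ : ℂ →+* ℂ, σ r ≠ r := by
  have hmain : ∃ (E : IntermediateField ℚ ℂ) (_ : Countable E) (hrE : r ∈ E)
      (τ : E →ₐ[ℚ] ℂ), τ ⟨r, hrE⟩ ≠ r := by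
    by_cases halg : IsAlgebraic ℚ r
    · -- algebraic case
      have hint : IsIntegral ℚ r := halg.isIntegral
      have hdeg : 2 ≤ (minpoly ℚ r).natDegree := by
        rw [minpoly.two_le_natDegree_iff hint]
        rintro ⟨y, rfl⟩
        exact hr ⟨y, rfl⟩
      -- find another root
      have hsep : (minpoly ℚ r).Separable := (minpoly.irreducible hint).separable
      have hsep' := hsep.map (f := algebraMap ℚ ℂ)
      have hnodup := (Polynomial.nodup_roots hsep' : ((minpoly ℚ r).aroots ℂ).Nodup)
      have hcardroots : ((minpoly ℚ r).aroots ℂ).card = (minpoly ℚ r).natDegree := by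
        rw [Polynomial.aroots_def,
          ← Polynomial.natDegree_map (algebraMap ℚ ℂ)]
        exact IsAlgClosed.card_roots_eq_natDegree
      have hrmem : r ∈ (minpoly ℚ r).aroots ℂ := by
        rw [Polynomial.mem_aroots]
        exact ⟨minpoly.ne_zero hint, minpoly.aeval ℚ r⟩
      have h1lt : 1 < ((minpoly ℚ r).aroots ℂ).toFinset.card := by
        rw [Multiset.toFinset_card_of_nodup hnodup, hcardroots]; omega
      obtain ⟨r', hr'mem, hr'ne⟩ :=
        Finset.exists_mem_ne h1lt r
      have hr'root : r' ∈ (minpoly ℚ r).aroots ℂ := Multiset.mem_toFinset.mp hr'mem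
      haveI : Algebra.IsAlgebraic ℚ ℚ⟮r⟯ := IntermediateField.isAlgebraic_adjoin_simple hint
      have hcE : Countable ℚ⟮r⟯ := by
        rw [← Cardinal.mk_le_aleph0_iff]
        refine (Algebra.IsAlgebraic.cardinalMk_le_max ℚ ℚ⟮r⟯).trans ?_
        simp [Cardinal.mk_le_aleph0]
      refine ⟨ℚ⟮r⟯, hcE, IntermediateField.mem_adjoin_simple_self ℚ r,
        (IntermediateField.algHomAdjoinIntegralEquiv ℚ hint).symm ⟨r', hr'root⟩, ?_⟩
      have := IntermediateField.algHomAdjoinIntegralEquiv_symm_apply_gen ℚ hint ⟨r', hr'root⟩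
      rw [show (⟨r, IntermediateField.mem_adjoin_simple_self ℚ r⟩ : ℚ⟮r⟯)
        = IntermediateField.AdjoinSimple.gen ℚ r from rfl]
      exact fun h => hr'ne (this.symm.trans h)
    · -- transcendental case
      have htr : Transcendental ℚ r := halg
      have htr1 : Transcendental ℚ (r + 1) := by
        intro h
        apply halg
        have h2 : IsIntegral ℚ (r + 1) := h.isIntegral
        have h3 : IsIntegral ℚ ((r + 1) + (-1)) := h2.add (isIntegral_one.neg)
        have h4 : IsIntegral ℚ r := by simpa using h3
        exact h4.isAlgebraic
      have hx : AlgebraicIndependent ℚ (fun _ : Unit => r) :=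
        algebraicIndependent_unique_type_iff.mpr htr
      have hy : AlgebraicIndependent ℚ (fun _ : Unit => r + 1) :=
        algebraicIndependent_unique_type_iff.mpr htr1
      have hrE : r ∈ IntermediateField.adjoin ℚ (Set.range fun _ : Unit => r) :=
        IntermediateField.subset_adjoin ℚ _ ⟨(), rfl⟩
      letI : Algebra ℚ (FractionRing (MvPolynomial Unit ℚ)) := OreLocalization.instAlgebra
      haveI hcountMv : Countable (MvPolynomial Unit ℚ) := by
        rw [← Cardinal.mk_le_aleph0_iff]
        refine MvPolynomial.cardinalMk_le_max.trans ?_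
        simp [Cardinal.mk_le_aleph0]
      haveI hcount : Countable (FractionRing (MvPolynomial Unit ℚ)) := by
        rw [← Cardinal.mk_le_aleph0_iff] at hcountMv ⊢
        exact (IsLocalization.cardinalMk_le
          (L := FractionRing (MvPolynomial Unit ℚ))
          (nonZeroDivisors (MvPolynomial Unit ℚ))).trans hcountMv
      have hcE : Countable (IntermediateField.adjoin ℚ (Set.range fun _ : Unit => r)) :=
        Countable.of_equiv _ hx.aevalEquivField.toEquiv
      refine ⟨_, hcE, hrE,
        (IntermediateField.adjoin ℚ (Set.range fun _ : Unit => r + 1)).val.comp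
          (hx.aevalEquivField.symm.trans hy.aevalEquivField).toAlgHom, ?_⟩
      have h1 : hx.aevalEquivField (algebraMap (MvPolynomial Unit ℚ)
          (FractionRing (MvPolynomial Unit ℚ)) (MvPolynomial.X ())) = ⟨r, hrE⟩ := by
        apply Subtype.ext
        rw [hx.aevalEquivField_algebraMap_apply_coe]
        simp
      have h2 : hx.aevalEquivField.symm ⟨r, hrE⟩ = algebraMap (MvPolynomial Unit ℚ)
          (FractionRing (MvPolynomial Unit ℚ)) (MvPolynomial.X ()) := by
        rw [← h1, AlgEquiv.symm_apply_apply]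
      show ((hx.aevalEquivField.symm.trans hy.aevalEquivField ⟨r, hrE⟩ : _) : ℂ) ≠ r
      rw [AlgEquiv.trans_apply, h2]
      have h3 : ((hy.aevalEquivField (algebraMap (MvPolynomial Unit ℚ)
          (FractionRing (MvPolynomial Unit ℚ)) (MvPolynomial.X ()))) : ℂ) = r + 1 := by
        rw [hy.aevalEquivField_algebraMap_apply_coe]
        simp
      show ((hy.aevalEquivField (algebraMap (MvPolynomial Unit ℚ)
          (FractionRing (MvPolynomial Unit ℚ)) (MvPolynomial.X ()))) : ℂ) ≠ r
      rw [h3]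
      intro hcontra
      have : (1 : ℂ) = 0 := by linear_combination hcontra
      simp at this
  obtain ⟨E, hcE, hrE, τ, hτ⟩ := hmain
  obtain ⟨σ, hσ⟩ := exists_ringHom_ext E hcE τ
  exact ⟨σ, by rw [show r = ((⟨r, hrE⟩ : E) : ℂ) from rfl, hσ]; exact hτ⟩

lemma ratCast_arithFixed (q : ℚ) : ArithFixed ((q : ℂ)) := by
  classical
  set n : ℕ := max q.num.natAbs q.den with hn
  have hden1 : 1 ≤ q.den := q.pos
  have hn1 : 1 ≤ n := le_trans hden1 (le_max_right _ _)
  set A : Finset ℂ :=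
    ((Finset.Icc (-(n : ℤ)) (n : ℤ)).image (fun k : ℤ => (k : ℂ))) ∪ {(q : ℂ)} with hA
  have hmem : ∀ k : ℤ, k.natAbs ≤ n → (k : ℂ) ∈ A := by
    intro k hk
    refine Finset.mem_union_left _ (Finset.mem_image.2 ⟨k, ?_, rfl⟩)
    rw [Finset.mem_Icc]; omega
  have hqmem : (q : ℂ) ∈ A := Finset.mem_union_right _ (Finset.mem_singleton_self _)
  refine ⟨A, hqmem, ?_⟩
  rintro f ⟨h1, hadd, hmul⟩
  have h0mem : (0 : ℂ) ∈ A := by simpa using hmem 0 (by simp)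
  have f0 : f 0 = 0 := by
    have := hadd 0 0 h0mem h0mem (by simpa using h0mem)
    rw [add_zero] at this
    exact (left_eq_add.mp this)
  have h1mem : (1 : ℂ) ∈ A := by simpa using hmem 1 (by simpa using hn1)
  have f1 : f 1 = 1 := h1 h1mem
  have hmemN : ∀ k : ℕ, k ≤ n → (k : ℂ) ∈ A := by
    intro k hk
    have := hmem (k : ℤ) (by simpa using hk)
    simpa using this
  have fnat : ∀ k : ℕ, k ≤ n → f k = k := by
    intro k
    induction k with
    | zero => intro _; simpa using f0
    | succ k ih =>
      intro hk
      have hk' : k ≤ n := Nat.le_of_succ_le hk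
      have hstep := hadd (k : ℂ) 1 (hmemN k hk') h1mem
        (by rw [show ((k : ℂ) + 1) = ((k + 1 : ℕ) : ℂ) by push_cast; ring]; exact hmemN _ hk)
      rw [show ((k : ℂ) + 1) = ((k + 1 : ℕ) : ℂ) by push_cast; ring] at hstep
      rw [hstep, ih hk', f1]
      push_cast; ring
  have fint : ∀ k : ℤ, k.natAbs ≤ n → f k = k := by
    intro k hk
    rcases le_or_gt 0 k with hk0 | hk0
    · obtain ⟨m, rfl⟩ := Int.eq_ofNat_of_zero_le hk0
      have := fnat m (by simpa using hk)
      simpa using this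
    · have hnegmem : ((-k : ℤ) : ℂ) ∈ A := hmem (-k) (by omega)
      have hstep := hadd (k : ℂ) ((-k : ℤ) : ℂ) (hmem k hk) hnegmem
        (by rw [show ((k : ℤ) : ℂ) + ((-k : ℤ) : ℂ) = 0 by push_cast; ring]; exact h0mem)
      rw [show ((k : ℤ) : ℂ) + ((-k : ℤ) : ℂ) = 0 by push_cast; ring] at hstep
      obtain ⟨m, hm⟩ := Int.eq_ofNat_of_zero_le (by omega : (0:ℤ) ≤ -k)
      have hfneg : f ((-k : ℤ) : ℂ) = ((-k : ℤ) : ℂ) := by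
        rw [hm]
        have := fnat m (by omega)
        simpa using this
      rw [f0, hfneg] at hstep
      push_cast at hstep ⊢
      linear_combination -hstep
  -- now the multiplicative relation den * q = num
  have hdnum : ((q.den : ℤ) : ℂ) * (q : ℂ) = ((q.num : ℤ) : ℂ) := by
    rw [Rat.cast_def]
    have h0 : ((q.den : ℤ) : ℂ) ≠ 0 := by exact_mod_cast q.den_nz
    push_cast
    field_simp
  have hdenmem : ((q.den : ℤ) : ℂ) ∈ A := hmem (q.den : ℤ) (by rw [Int.natAbs_natCast, hn]; exact le_max_right _ _)
  have hnummem : ((q.num : ℤ) : ℂ) ∈ A := hmem q.num (le_max_left _ _)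
  have hstep := hmul ((q.den : ℤ) : ℂ) (q : ℂ) hdenmem hqmem (by rw [hdnum]; exact hnummem)
  rw [hdnum, fint q.num (le_max_left _ _), fint (q.den : ℤ) (by rw [Int.natAbs_natCast, hn]; exact le_max_right _ _)] at hstep
  have hden0 : ((q.den : ℤ) : ℂ) ≠ 0 := by exact_mod_cast q.den_nz
  have : f (q : ℂ) = ((q.num : ℤ) : ℂ) / ((q.den : ℤ) : ℂ) := by
    rw [eq_div_iff hden0]
    linear_combination -hstep
  rw [this, Rat.cast_def]
  push_cast
  ring

theorem arithFixed_complex_iff_rational :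
    {r : ℂ | ArithFixed r} = Set.range ((↑) : ℚ → ℂ) := by
  ext r
  simp only [Set.mem_setOf_eq]
  constructor
  · intro h
    by_contra hr
    obtain ⟨σ, hσ⟩ := exists_ringHom_ne r hr
    obtain ⟨A, hrA, hfix⟩ := h
    exact hσ (hfix σ ⟨fun _ => σ.map_one, fun a b _ _ _ => σ.map_add a b,
      fun a b _ _ _ => σ.map_mul a b⟩)
  · rintro ⟨q, rfl⟩
    exact ratCast_arithFixed q
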